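/- Suppose (U'₁,U'₂,<') is the result of applying a case I coherent extended Nielsen transformation to a coherent extended word equation (U₁,U₂,<) whose cut graph G_{U₁,U₂,<} is acyclic. Then for every boundary (i,j) ∈ B' of (U'₁,U'₂), the fecundity satisfies f_{U'₁,U'₂,<'}(i,j) ≤ f_{U₁,U₂,<}(i,j+1). -/

import Mathlib

open scoped Classical

namespace ExtWordEq

/-- The type of (candidate) boundary orders: relations on pairs (i,j). -/
abbrev BRel : Type := ℕ × ℕ → ℕ × ℕ → Prop

variable {X : Type*}

/-- The `i`-th side of the word equation (`i = 1` gives `U₁`, anything else `U₂`). -/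
def word (U₁ U₂ : List X) (i : ℕ) : List X := if i = 1 then U₁ else U₂

/-- The variable `U_{i,j}` (1-indexed), as an optional value. -/
def letter (U₁ U₂ : List X) (b : ℕ × ℕ) : Option X := (word U₁ U₂ b.1)[b.2 - 1]?

/-- `b` is a boundary of the word equation `(U₁, U₂)`. -/
def Boundary (U₁ U₂ : List X) (b : ℕ × ℕ) : Prop :=
  (b.1 = 1 ∨ b.1 = 2) ∧ 1 ≤ b.2 ∧ b.2 ≤ (word U₁ U₂ b.1).length

/-- `b` is a boundary of `(U₁, U₂)` or one of the conventional boundaries `(1,0)`, `(2,0)`. -/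
def EBoundary (U₁ U₂ : List X) (b : ℕ × ℕ) : Prop :=
  (b.1 = 1 ∨ b.1 = 2) ∧ b.2 ≤ (word U₁ U₂ b.1).length

/-- Incomparability `a ≈ b` for a strict order. -/
def Incomp (lt : BRel) (a b : ℕ × ℕ) : Prop := ¬ lt a b ∧ ¬ lt b a

/-- `lt` is a boundary order for the word equation `(U₁, U₂)`:
a strict weak order on the boundaries (together with the conventional boundaries
`(1,0) ≈ (2,0)`), extending `(i,j) < (i,j+1)` and with `(1,m) ≈ (2,n)`. -/
structure BoundaryOrder (U₁ U₂ : List X) (lt : BRel) : Prop where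
  irrefl : ∀ a, EBoundary U₁ U₂ a → ¬ lt a a
  trans : ∀ a b c, EBoundary U₁ U₂ a → EBoundary U₁ U₂ b → EBoundary U₁ U₂ c →
    lt a b → lt b c → lt a c
  incomp_trans : ∀ a b c, EBoundary U₁ U₂ a → EBoundary U₁ U₂ b → EBoundary U₁ U₂ c →
    Incomp lt a b → Incomp lt b c → Incomp lt a c
  succ : ∀ i j : ℕ, EBoundary U₁ U₂ (i, j + 1) → lt (i, j) (i, j + 1)
  top : Incomp lt (1, U₁.length) (2, U₂.length)
  bot : Incomp lt (1, 0) (2, 0)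

/-- `L(U_{i,1} U_{i,2} ⋯ U_{i,j})` where `L` is the additive extension of a length
assignment on variables. -/
def prefixLen (U₁ U₂ : List X) (L : X → ℕ) (b : ℕ × ℕ) : ℕ :=
  (((word U₁ U₂ b.1).take b.2).map L).sum

/-- The extended word equation `(U₁, U₂, lt)` is coherent. -/
def Coherent (U₁ U₂ : List X) (lt : BRel) : Prop :=
  ∃ L : X → ℕ, (∀ x, 0 < L x) ∧
    ∀ a b, Boundary U₁ U₂ a → Boundary U₁ U₂ b →
      (lt a b ↔ prefixLen U₁ U₂ L a < prefixLen U₁ U₂ L b)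

/-- The boundary `a` cuts the boundary `b`. -/
def Cuts (U₁ U₂ : List X) (lt : BRel) (a b : ℕ × ℕ) : Prop :=
  Boundary U₁ U₂ a ∧ Boundary U₁ U₂ b ∧ a ≠ b ∧
    lt (a.1, a.2 - 1) b ∧ lt (b.1, b.2 - 1) a

/-- The boundary `a` mirrors the boundary `b`. -/
def Mirrors (U₁ U₂ : List X) (lt : BRel) (a b : ℕ × ℕ) : Prop :=
  Boundary U₁ U₂ a ∧ Boundary U₁ U₂ b ∧ letter U₁ U₂ a = letter U₁ U₂ b ∧
    (¬ Incomp lt a b ∨ ¬ Incomp lt (a.1, a.2 - 1) (b.1, b.2 - 1))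

/-- Edge relation of the cut graph `G_{U₁,U₂,<}`. -/
def CutEdge (U₁ U₂ : List X) (lt : BRel) (a b : ℕ × ℕ) : Prop :=
  ∃ c, Cuts U₁ U₂ lt a c ∧ Mirrors U₁ U₂ lt c b

/-- `w 0, w 1, …, w n` is a cycle (of length `n ≥ 1`) in the cut graph. -/
def IsCycle (U₁ U₂ : List X) (lt : BRel) (n : ℕ) (w : ℕ → ℕ × ℕ) : Prop :=
  0 < n ∧ w n = w 0 ∧ ∀ k < n, CutEdge U₁ U₂ lt (w k) (w (k + 1))

/-- The cut graph `G_{U₁,U₂,<}` is acyclic. -/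
def Acyclic (U₁ U₂ : List X) (lt : BRel) : Prop :=
  ¬ ∃ n w, IsCycle U₁ U₂ lt n w

variable [DecidableEq X]

/-- Case I extended Nielsen transformation (here `x = U_{1,1}`, `y = U_{2,1}`,
and `T(y) = x`). -/
def NielsenI (U₁ U₂ : List X) (lt : BRel) (U₁' U₂' : List X) (lt' : BRel) : Prop :=
  ∃ x y : X, U₁.head? = some x ∧ U₂.head? = some y ∧
    Incomp lt (1, 1) (2, 1) ∧
    U₁' = (U₁.map fun z => if z = y then x else z).tail ∧
    U₂' = (U₂.map fun z => if z = y then x else z).tail ∧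
    BoundaryOrder U₁' U₂' lt' ∧
    ∀ a b : ℕ × ℕ, EBoundary U₁' U₂' a → EBoundary U₁' U₂' b →
      (lt' a b ↔ lt (a.1, a.2 + 1) (b.1, b.2 + 1))

/-- The substitution `T(x) = y x` (identity on other variables), applied to a word. -/
def expand (x y : X) (l : List X) : List X :=
  l.flatMap fun z => if z = x then [y, x] else [z]

/-- The map `μ(i,j) = j + #{j' ≤ j : U_{i,j'} = x} − 1` (as a map on boundaries),
where `x = U_{1,1}`. -/
def mu (U₁ U₂ : List X) (x : X) (b : ℕ × ℕ) : ℕ × ℕ :=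
  (b.1, b.2 + ((word U₁ U₂ b.1).take b.2).count x - 1)

/-- The map `ν(i,j) = j − #{j' ≤ j : U'_{i,j'} = x} + 1` (as a map on boundaries),
where `x = U_{1,1}`. -/
def nu (U₁' U₂' : List X) (x : X) (b : ℕ × ℕ) : ℕ × ℕ :=
  (b.1, b.2 - ((word U₁' U₂' b.1).take b.2).count x + 1)

/-- Membership in `B⁻ = B ∖ {(2,1)}`. -/
def Bminus (U₁ U₂ : List X) (b : ℕ × ℕ) : Prop := Boundary U₁ U₂ b ∧ b ≠ (2, 1)

/-- Membership in `B'⁻ = {(i, μ(i,j)) : (i,j) ∈ B⁻}` (`x = U_{1,1}`). -/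
def Bpminus (U₁ U₂ : List X) (x : X) (b' : ℕ × ℕ) : Prop :=
  ∃ b, Bminus U₁ U₂ b ∧ mu U₁ U₂ x b = b'

/-- Case II extended Nielsen transformation, with the heads `x = U_{1,1}`,
`y = U_{2,1}` made explicit. -/
def NielsenIIxy (U₁ U₂ : List X) (lt : BRel) (U₁' U₂' : List X) (lt' : BRel)
    (x y : X) : Prop :=
  U₁.head? = some x ∧ U₂.head? = some y ∧
  lt (2, 1) (1, 1) ∧
  U₁' = (expand x y U₁).tail ∧
  U₂' = (expand x y U₂).tail ∧
  BoundaryOrder U₁' U₂' lt' ∧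
  ∀ a b, Bpminus U₁ U₂ x a → Bpminus U₁ U₂ x b →
    (lt' a b ↔ lt (nu U₁' U₂' x a) (nu U₁' U₂' x b))

/-- Case II extended Nielsen transformation. -/
def NielsenII (U₁ U₂ : List X) (lt : BRel) (U₁' U₂' : List X) (lt' : BRel) : Prop :=
  ∃ x y : X, NielsenIIxy U₁ U₂ lt U₁' U₂' lt' x y

/-- The dual boundary order. -/
def dualRel (lt : BRel) : BRel := fun a b => lt (3 - a.1, a.2) (3 - b.1, b.2)

/-- Case III extended Nielsen transformation: case II applied to the dual,
then dualized back. -/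
def NielsenIII (U₁ U₂ : List X) (lt : BRel) (U₁' U₂' : List X) (lt' : BRel) : Prop :=
  NielsenII U₂ U₁ (dualRel lt) U₂' U₁' (dualRel lt')

/-- `(U₁', U₂', lt')` is an extended Nielsen transformation of the nontrivial coherent
extended word equation `(U₁, U₂, lt)`. -/
def ExtNielsen (U₁ U₂ : List X) (lt : BRel) (U₁' U₂' : List X) (lt' : BRel) : Prop :=
  U₁ ≠ [] ∧ U₂ ≠ [] ∧ BoundaryOrder U₁ U₂ lt ∧ Coherent U₁ U₂ lt ∧
    (NielsenI U₁ U₂ lt U₁' U₂' lt' ∨ NielsenII U₁ U₂ lt U₁' U₂' lt' ∨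
      NielsenIII U₁ U₂ lt U₁' U₂' lt')

/-- A coherent extended Nielsen transformation. -/
def CohNielsen (U₁ U₂ : List X) (lt : BRel) (U₁' U₂' : List X) (lt' : BRel) : Prop :=
  ExtNielsen U₁ U₂ lt U₁' U₂' lt' ∧ Coherent U₁' U₂' lt'

/-- `(U₁, U₂, lt)` is (strongly) terminating: there is no infinite sequence of coherent
extended Nielsen transformations starting from it. -/
def Terminating (U₁ U₂ : List X) (lt : BRel) : Prop :=
  ¬ ∃ f : ℕ → List X × List X × BRel,
    f 0 = (U₁, U₂, lt) ∧
    ∀ n, CohNielsen (f n).1 (f n).2.1 (f n).2.2 (f (n + 1)).1 (f (n + 1)).2.1 (f (n + 1)).2.2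


/-- The finite set of boundaries of `(U₁, U₂)`. -/
def boundaryFinset (U₁ U₂ : List X) : Finset (ℕ × ℕ) :=
  ((Finset.range U₁.length).image fun j => (1, j + 1)) ∪
    ((Finset.range U₂.length).image fun j => (2, j + 1))

/-- `f` is the fecundity function of `(U₁, U₂, lt)`: on every boundary `b`,
`f b = 1 + max over boundaries c cut by b of (sum over boundaries d mirrored by c of f d)`. -/
def IsFecundity (U₁ U₂ : List X) (lt : BRel) (f : ℕ × ℕ → ℕ) : Prop :=
  ∀ b ∈ boundaryFinset U₁ U₂,
    f b = 1 + ((boundaryFinset U₁ U₂).filter fun c => Cuts U₁ U₂ lt b c).sup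
      fun c => ((boundaryFinset U₁ U₂).filter fun d => Mirrors U₁ U₂ lt c d).sum f

omit [DecidableEq X] in
/-- Membership in `boundaryFinset` is the same as being a boundary. -/
lemma mem_boundaryFinset {U₁ U₂ : List X} {b : ℕ × ℕ} :
    b ∈ boundaryFinset U₁ U₂ ↔ Boundary U₁ U₂ b := by
  obtain ⟨i, j⟩ := b
  simp only [boundaryFinset, Finset.mem_union, Finset.mem_image, Finset.mem_range,
    Prod.mk.injEq]
  constructor
  · rintro (⟨k, hk, rfl, rfl⟩ | ⟨k, hk, rfl, rfl⟩)
    · exact ⟨Or.inl rfl, show 1 ≤ k + 1 by omega, show k + 1 ≤ U₁.length by omega⟩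
    · exact ⟨Or.inr rfl, show 1 ≤ k + 1 by omega, show k + 1 ≤ U₂.length by omega⟩
  · rintro ⟨(rfl | rfl), h1, h2⟩
    · have h1' : 1 ≤ j := h1
      have h2' : j ≤ U₁.length := h2
      exact Or.inl ⟨j - 1, by omega, rfl, by omega⟩
    · have h1' : 1 ≤ j := h1
      have h2' : j ≤ U₂.length := h2
      exact Or.inr ⟨j - 1, by omega, rfl, by omega⟩

/-- **Lemma.** After a case I coherent extended Nielsen transformation of an
extended word equation with acyclic cut graph, the fecundity of every new boundary
`(i,j)` is at most the fecundity of the old boundary `(i,j+1)`. -/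
theorem fecundity_le_caseI (U₁ U₂ U₁' U₂' : List X) (lt lt' : BRel)
    (h₁ : U₁ ≠ []) (h₂ : U₂ ≠ []) (hbo : BoundaryOrder U₁ U₂ lt)
    (hcoh : Coherent U₁ U₂ lt)
    (hI : NielsenI U₁ U₂ lt U₁' U₂' lt') (hcoh' : Coherent U₁' U₂' lt')
    (hacyc : Acyclic U₁ U₂ lt)
    (f f' : ℕ × ℕ → ℕ)
    (hf : IsFecundity U₁ U₂ lt f) (hf' : IsFecundity U₁' U₂' lt' f') :
    ∀ b, Boundary U₁' U₂' b → f' b ≤ f (b.1, b.2 + 1) := by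
  obtain ⟨x, y, hx, hy, hxy_inc, hU1', hU2', hbo', hiff⟩ := hI
  set T : X → X := fun z => if z = y then x else z with hT
  -- basic facts about the words
  have hW' : ∀ i, word U₁' U₂' i = ((word U₁ U₂ i).map T).tail := by
    intro i
    by_cases hi : i = 1
    · subst hi; exact hU1'
    · simp only [word, if_neg hi]; exact hU2'
  have hlen1 : ∀ i, 1 ≤ (word U₁ U₂ i).length := by
    intro i
    by_cases hi : i = 1
    · subst hi; exact List.length_pos_iff.mpr h₁
    · simp only [word, if_neg hi]; exact List.length_pos_iff.mpr h₂
  have hlen : ∀ i, (word U₁ U₂ i).length = (word U₁' U₂' i).length + 1 := by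
    intro i
    rw [hW' i, List.length_tail, List.length_map]
    have := hlen1 i
    omega
  have hsB : ∀ b : ℕ × ℕ, Boundary U₁' U₂' b → Boundary U₁ U₂ (b.1, b.2 + 1) := by
    rintro ⟨i, j⟩ ⟨hi, hj1, hj2⟩
    have hj2' : j ≤ (word U₁' U₂' i).length := hj2
    have hl := hlen i
    exact ⟨hi, show 1 ≤ j + 1 by omega, show j + 1 ≤ (word U₁ U₂ i).length by omega⟩
  have hEB' : ∀ b : ℕ × ℕ, Boundary U₁' U₂' b → EBoundary U₁' U₂' b :=
    fun b hb => ⟨hb.1, hb.2.2⟩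
  have hEBpred' : ∀ b : ℕ × ℕ, Boundary U₁' U₂' b → EBoundary U₁' U₂' (b.1, b.2 - 1) :=
    fun b hb => ⟨hb.1, le_trans (Nat.sub_le _ _) hb.2.2⟩
  -- letters
  have hletterOld : ∀ b : ℕ × ℕ, letter U₁ U₂ (b.1, b.2 + 1) = (word U₁ U₂ b.1)[b.2]? := by
    rintro ⟨i, j⟩; rfl
  have hletter : ∀ b : ℕ × ℕ, 1 ≤ b.2 →
      letter U₁' U₂' b = ((word U₁ U₂ b.1)[b.2]?).map T := by
    rintro ⟨i, j⟩ hj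
    have hj' : 1 ≤ j := hj
    show ((word U₁' U₂' i))[j - 1]? = _
    rw [hW' i, List.getElem?_tail, List.getElem?_map]
    have : j - 1 + 1 = j := by omega
    rw [this]
  have hletter' : ∀ b : ℕ × ℕ, 1 ≤ b.2 →
      letter U₁' U₂' b = (letter U₁ U₂ (b.1, b.2 + 1)).map T := by
    intro b hb; rw [hletter b hb, hletterOld b]
  have hsome : ∀ b : ℕ × ℕ, Boundary U₁ U₂ b → ∃ z, letter U₁ U₂ b = some z := by
    rintro ⟨i, j⟩ ⟨hi, hj1, hj2⟩
    have hj1' : 1 ≤ j := hj1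
    have hj2' : j ≤ (word U₁ U₂ i).length := hj2
    have hlt : j - 1 < (word U₁ U₂ i).length := by omega
    exact ⟨_, List.getElem?_eq_getElem hlt⟩
  have hhead1 : letter U₁ U₂ (1, 1) = some x := by
    have : U₁[0]? = some x := by rw [← List.head?_eq_getElem?]; exact hx
    exact this
  have hhead2 : letter U₁ U₂ (2, 1) = some y := by
    have : U₂[0]? = some y := by rw [← List.head?_eq_getElem?]; exact hy
    exact this
  -- the conventional bottom boundaries are below every boundary
  have hA : ∀ j i, (i = 1 ∨ i = 2) → j + 1 ≤ (word U₁ U₂ i).length → lt (i, 0) (i, j + 1) := by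
    intro j
    induction j with
    | zero => intro i hi hle; exact hbo.succ i 0 ⟨hi, hle⟩
    | succ j ih =>
      intro i hi hle
      exact hbo.trans (i, 0) (i, j + 1) (i, j + 2) ⟨hi, Nat.zero_le _⟩
        ⟨hi, show j + 1 ≤ (word U₁ U₂ i).length by omega⟩
        ⟨hi, hle⟩ (ih i hi (by omega)) (hbo.succ i (j + 1) ⟨hi, hle⟩)
  have hlt0 : ∀ (i₀ : ℕ) (e : ℕ × ℕ), (i₀ = 1 ∨ i₀ = 2) → EBoundary U₁ U₂ e → 1 ≤ e.2 →
      lt (i₀, 0) e := by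
    rintro i₀ ⟨i, j⟩ hi₀ ⟨hi, hle⟩ hj
    have hj' : 1 ≤ j := hj
    have hle' : j ≤ (word U₁ U₂ i).length := hle
    obtain ⟨k, rfl⟩ : ∃ k, j = k + 1 := ⟨j - 1, by omega⟩
    have hAe : lt (i, 0) (i, k + 1) := hA k i hi hle'
    by_cases hii : i₀ = i
    · subst hii; exact hAe
    · have hbot : Incomp lt (i, 0) (i₀, 0) := by
        rcases hi with rfl | rfl <;> rcases hi₀ with rfl | rfl
        · exact absurd rfl hii
        · exact hbo.bot
        · exact ⟨hbo.bot.2, hbo.bot.1⟩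
        · exact absurd rfl hii
      by_contra hnot
      by_cases h2 : lt (i, k + 1) (i₀, 0)
      · exact hbot.1 (hbo.trans (i, 0) (i, k + 1) (i₀, 0) ⟨hi, Nat.zero_le _⟩
          ⟨hi, hle'⟩ ⟨hi₀, Nat.zero_le _⟩ hAe h2)
      · exact (hbo.incomp_trans (i, 0) (i₀, 0) (i, k + 1) ⟨hi, Nat.zero_le _⟩
          ⟨hi₀, Nat.zero_le _⟩ ⟨hi, hle'⟩ hbot ⟨hnot, h2⟩).1 hAe
  -- mirror lemmas with head boundaries
  have hmirror_one : ∀ (i₀ : ℕ) (e : ℕ × ℕ), (i₀ = 1 ∨ i₀ = 2) → Boundary U₁ U₂ e →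
      2 ≤ e.2 → letter U₁ U₂ (i₀, 1) = letter U₁ U₂ e → Mirrors U₁ U₂ lt (i₀, 1) e := by
    intro i₀ e hi₀ he h2 hlet
    refine ⟨⟨hi₀, le_refl 1, hlen1 i₀⟩, he, hlet, Or.inr fun hinc => ?_⟩
    exact hinc.1 (hlt0 i₀ (e.1, e.2 - 1) hi₀ ⟨he.1, le_trans (Nat.sub_le _ _) he.2.2⟩
      (show 1 ≤ e.2 - 1 by omega))
  have hmirror_one' : ∀ (i₀ : ℕ) (e : ℕ × ℕ), (i₀ = 1 ∨ i₀ = 2) → Boundary U₁ U₂ e →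
      2 ≤ e.2 → letter U₁ U₂ e = letter U₁ U₂ (i₀, 1) → Mirrors U₁ U₂ lt e (i₀, 1) := by
    intro i₀ e hi₀ he h2 hlet
    refine ⟨he, ⟨hi₀, le_refl 1, hlen1 i₀⟩, hlet, Or.inr fun hinc => ?_⟩
    exact hinc.2 (hlt0 i₀ (e.1, e.2 - 1) hi₀ ⟨he.1, le_trans (Nat.sub_le _ _) he.2.2⟩
      (show 1 ≤ e.2 - 1 by omega))
  have hcut11 : Cuts U₁ U₂ lt (1, 1) (2, 1) :=
    ⟨⟨Or.inl rfl, le_refl 1, hlen1 1⟩, ⟨Or.inr rfl, le_refl 1, hlen1 2⟩, by decide,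
      hlt0 1 (2, 1) (Or.inl rfl) ⟨Or.inr rfl, hlen1 2⟩ (le_refl 1),
      hlt0 2 (1, 1) (Or.inr rfl) ⟨Or.inl rfl, hlen1 1⟩ (le_refl 1)⟩
  have hcut21 : Cuts U₁ U₂ lt (2, 1) (1, 1) :=
    ⟨⟨Or.inr rfl, le_refl 1, hlen1 2⟩, ⟨Or.inl rfl, le_refl 1, hlen1 1⟩, by decide,
      hlt0 2 (1, 1) (Or.inr rfl) ⟨Or.inl rfl, hlen1 1⟩ (le_refl 1),
      hlt0 1 (2, 1) (Or.inl rfl) ⟨Or.inr rfl, hlen1 2⟩ (le_refl 1)⟩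
  -- transfer lemmas
  have hltT : ∀ i j i' j' : ℕ, EBoundary U₁' U₂' (i, j) → EBoundary U₁' U₂' (i', j') →
      lt' (i, j) (i', j') → lt (i, j + 1) (i', j' + 1) :=
    fun i j i' j' h h' hl => (hiff (i, j) (i', j') h h').1 hl
  have hincT : ∀ i j i' j' : ℕ, EBoundary U₁' U₂' (i, j) → EBoundary U₁' U₂' (i', j') →
      (Incomp lt' (i, j) (i', j') ↔ Incomp lt (i, j + 1) (i', j' + 1)) := by
    intro i j i' j' h h'
    constructor
    · rintro ⟨p, q⟩
      exact ⟨fun r => p ((hiff (i, j) (i', j') h h').2 r),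
        fun r => q ((hiff (i', j') (i, j) h' h).2 r)⟩
    · rintro ⟨p, q⟩
      exact ⟨fun r => p ((hiff (i, j) (i', j') h h').1 r),
        fun r => q ((hiff (i', j') (i, j) h' h).1 r)⟩
  have hcutT : ∀ b c : ℕ × ℕ, Cuts U₁' U₂' lt' b c →
      Cuts U₁ U₂ lt (b.1, b.2 + 1) (c.1, c.2 + 1) := by
    rintro b c ⟨hBb, hBc, hne, hl1, hl2⟩
    have hb2 : b.2 - 1 + 1 = b.2 := by have := hBb.2.1; omega
    have hc2 : c.2 - 1 + 1 = c.2 := by have := hBc.2.1; omega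
    have e1 := hltT b.1 (b.2 - 1) c.1 c.2 (hEBpred' b hBb) (hEB' c hBc) hl1
    have e2 := hltT c.1 (c.2 - 1) b.1 b.2 (hEBpred' c hBc) (hEB' b hBb) hl2
    rw [hb2] at e1
    rw [hc2] at e2
    refine ⟨hsB b hBb, hsB c hBc, ?_, e1, e2⟩
    intro h
    injection h with h1 h2
    exact hne (Prod.ext_iff.mpr ⟨h1, by omega⟩)
  have hmirT : ∀ c d : ℕ × ℕ, Mirrors U₁' U₂' lt' c d →
      letter U₁ U₂ (c.1, c.2 + 1) = letter U₁ U₂ (d.1, d.2 + 1) →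
      Mirrors U₁ U₂ lt (c.1, c.2 + 1) (d.1, d.2 + 1) := by
    rintro c d ⟨hBc, hBd, _, hdisj⟩ hlet
    have hc2 : c.2 - 1 + 1 = c.2 := by have := hBc.2.1; omega
    have hd2 : d.2 - 1 + 1 = d.2 := by have := hBd.2.1; omega
    refine ⟨hsB c hBc, hsB d hBd, hlet, ?_⟩
    rcases hdisj with h | h
    · exact Or.inl fun hi => h ((hincT c.1 c.2 d.1 d.2 (hEB' c hBc) (hEB' d hBd)).2 hi)
    · refine Or.inr fun hi => h ?_
      apply (hincT c.1 (c.2 - 1) d.1 (d.2 - 1) (hEBpred' c hBc) (hEBpred' d hBd)).2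
      rw [hc2, hd2]
      exact hi
  -- injectivity of the shift
  have hinj : ∀ (s : Finset (ℕ × ℕ)), ∀ a ∈ s, ∀ b ∈ s,
      ((a : ℕ × ℕ).1, a.2 + 1) = (b.1, b.2 + 1) → a = b := by
    intro s a _ b _ h
    injection h with h1 h2
    exact Prod.ext_iff.mpr ⟨h1, by omega⟩
  -- main induction
  suffices H : ∀ n : ℕ, ∀ b : ℕ × ℕ, Boundary U₁' U₂' b → f (b.1, b.2 + 1) = n → f' b ≤ n by
    intro b hb; exact H _ b hb rfl
  intro n
  induction n using Nat.strong_induction_on with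
  | _ n IH =>
  intro b hb hn
  have hbF : b ∈ boundaryFinset U₁' U₂' := mem_boundaryFinset.2 hb
  have hsbB : Boundary U₁ U₂ (b.1, b.2 + 1) := hsB b hb
  have hsbF : (b.1, b.2 + 1) ∈ boundaryFinset U₁ U₂ := mem_boundaryFinset.2 hsbB
  rw [hf' b hbF]
  rw [hf _ hsbF] at hn
  rw [← hn]
  apply Nat.add_le_add_left
  apply Finset.sup_le
  intro c' hc'F
  rw [Finset.mem_filter] at hc'F
  obtain ⟨hc'BF, hcut⟩ := hc'F
  have hc'B : Boundary U₁' U₂' c' := mem_boundaryFinset.1 hc'BF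
  have heB : Boundary U₁ U₂ (c'.1, c'.2 + 1) := hsB c' hc'B
  have hcutO : Cuts U₁ U₂ lt (b.1, b.2 + 1) (c'.1, c'.2 + 1) := hcutT b c' hcut
  have heF : (c'.1, c'.2 + 1) ∈ (boundaryFinset U₁ U₂).filter
      (fun c => Cuts U₁ U₂ lt (b.1, b.2 + 1) c) :=
    Finset.mem_filter.2 ⟨mem_boundaryFinset.2 heB, hcutO⟩
  have hle_sup : ((boundaryFinset U₁ U₂).filter
      (fun d => Mirrors U₁ U₂ lt (c'.1, c'.2 + 1) d)).sum f ≤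
      ((boundaryFinset U₁ U₂).filter (fun c => Cuts U₁ U₂ lt (b.1, b.2 + 1) c)).sup
      (fun c => ((boundaryFinset U₁ U₂).filter (fun d => Mirrors U₁ U₂ lt c d)).sum f) :=
    Finset.le_sup (f := fun c => ((boundaryFinset U₁ U₂).filter
      (fun d => Mirrors U₁ U₂ lt c d)).sum f) heF
  have hM'B : ∀ d' ∈ (boundaryFinset U₁' U₂').filter (fun d => Mirrors U₁' U₂' lt' c' d),
      Boundary U₁' U₂' d' := fun d' hd' => (Finset.mem_filter.1 hd').2.2.1
  set M' := (boundaryFinset U₁' U₂').filter (fun d => Mirrors U₁' U₂' lt' c' d) with hM'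
  set Me := (boundaryFinset U₁ U₂).filter
    (fun d => Mirrors U₁ U₂ lt (c'.1, c'.2 + 1) d) with hMe
  obtain ⟨z, hz⟩ := hsome (c'.1, c'.2 + 1) heB
  -- classification of mirrored boundaries
  have hsplit : ∀ d' ∈ M', Mirrors U₁ U₂ lt (c'.1, c'.2 + 1) (d'.1, d'.2 + 1) ∨
      (letter U₁ U₂ (d'.1, d'.2 + 1) = some (if z = x then y else x) ∧ (z = x ∨ z = y)) := by
    intro d' hd'
    rw [hM', Finset.mem_filter] at hd'
    obtain ⟨hd'F, hmir⟩ := hd'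
    have hd'B : Boundary U₁' U₂' d' := hmir.2.1
    obtain ⟨w, hw⟩ := hsome (d'.1, d'.2 + 1) (hsB d' hd'B)
    by_cases hzw : letter U₁ U₂ (c'.1, c'.2 + 1) = letter U₁ U₂ (d'.1, d'.2 + 1)
    · exact Or.inl (hmirT c' d' hmir hzw)
    · right
      have hnl : letter U₁' U₂' c' = letter U₁' U₂' d' := hmir.2.2.1
      rw [hletter' c' hc'B.2.1, hletter' d' hd'B.2.1, hz, hw] at hnl
      simp only [Option.map_some] at hnl
      have hTzw : T z = T w := Option.some.inj hnl
      have hzw' : z ≠ w := fun h => hzw (by rw [hz, hw, h])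
      simp only [hT] at hTzw
      have hkey : w = (if z = x then y else x) ∧ (z = x ∨ z = y) := by
        by_cases hzy : z = y
        · by_cases hwy : w = y
          · exact absurd (hzy.trans hwy.symm) hzw'
          · rw [if_pos hzy, if_neg hwy] at hTzw
            by_cases hzx : z = x
            · exact absurd (hTzw.symm.trans (hzx.symm.trans hzy)) hwy
            · exact ⟨by rw [if_neg hzx]; exact hTzw.symm, Or.inr hzy⟩
        · by_cases hwy : w = y
          · rw [if_neg hzy, if_pos hwy] at hTzw
            exact ⟨by rw [if_pos hTzw]; exact hwy, Or.inl hTzw⟩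
          · rw [if_neg hzy, if_neg hwy] at hTzw
            exact absurd hTzw hzw'
      exact ⟨by rw [hw, hkey.1], hkey.2⟩
  set S := M'.filter (fun d' => Mirrors U₁ U₂ lt (c'.1, c'.2 + 1) (d'.1, d'.2 + 1)) with hS
  set Mx := M' \ S with hMx
  have hSmem : ∀ d' : ℕ × ℕ, d' ∈ S ↔
      d' ∈ M' ∧ Mirrors U₁ U₂ lt (c'.1, c'.2 + 1) (d'.1, d'.2 + 1) := by
    intro d'; rw [hS, Finset.mem_filter]
  have hMxmem : ∀ d' : ℕ × ℕ, d' ∈ Mx ↔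
      d' ∈ M' ∧ ¬ Mirrors U₁ U₂ lt (c'.1, c'.2 + 1) (d'.1, d'.2 + 1) := by
    intro d'
    constructor
    · intro h
      have h1 := Finset.mem_sdiff.1 h
      exact ⟨h1.1, fun hc => h1.2 ((hSmem d').2 ⟨h1.1, hc⟩)⟩
    · intro h
      exact Finset.mem_sdiff.2 ⟨h.1, fun hc => h.2 (((hSmem d').1 hc).2)⟩
  have hsum : Mx.sum (fun d' => f (d'.1, d'.2 + 1)) + S.sum (fun d' => f (d'.1, d'.2 + 1)) =
      M'.sum (fun d' => f (d'.1, d'.2 + 1)) := Finset.sum_sdiff (Finset.filter_subset _ _)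
  have hSsub : S.image (fun p : ℕ × ℕ => (p.1, p.2 + 1)) ⊆ Me := by
    intro dd hdd
    obtain ⟨d', hd'S, rfl⟩ := Finset.mem_image.1 hdd
    obtain ⟨hd'M, hmirO⟩ := (hSmem d').1 hd'S
    rw [hMe, Finset.mem_filter]
    exact ⟨mem_boundaryFinset.2 (hsB d' (hM'B d' hd'M)), hmirO⟩
  have eS : (S.image (fun p : ℕ × ℕ => (p.1, p.2 + 1))).sum f =
      S.sum (fun d' => f (d'.1, d'.2 + 1)) := Finset.sum_image (hinj S)
  have key : (∀ d' ∈ M', f (d'.1, d'.2 + 1) < n) ∧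
      M'.sum (fun d' => f (d'.1, d'.2 + 1)) ≤ Me.sum f := by
    by_cases hMxe : Mx = ∅
    · have hallS : ∀ d' ∈ M', d' ∈ S := by
        intro d' hd'
        by_cases hcon : Mirrors U₁ U₂ lt (c'.1, c'.2 + 1) (d'.1, d'.2 + 1)
        · exact (hSmem d').2 ⟨hd', hcon⟩
        · have : d' ∈ Mx := (hMxmem d').2 ⟨hd', hcon⟩
          rw [hMxe] at this
          exact absurd this (Finset.notMem_empty d')
      constructor
      · intro d' hd'
        have hmem : (d'.1, d'.2 + 1) ∈ Me :=
          hSsub (Finset.mem_image_of_mem _ (hallS d' hd'))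
        have hone : f (d'.1, d'.2 + 1) ≤ Me.sum f :=
          Finset.single_le_sum (fun i _ => Nat.zero_le (f i)) hmem
        omega
      · have hMx0 : Mx.sum (fun d' => f (d'.1, d'.2 + 1)) = 0 := by
          rw [hMxe]; exact Finset.sum_empty
        have h1 : S.sum (fun d' => f (d'.1, d'.2 + 1)) ≤ Me.sum f := by
          rw [← eS]; exact Finset.sum_le_sum_of_subset hSsub
        omega
    · obtain ⟨d₀, hd₀⟩ := Finset.nonempty_iff_ne_empty.2 hMxe
      obtain ⟨hd₀M, hd₀n⟩ := (hMxmem d₀).1 hd₀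
      have hzxy : z = x ∨ z = y := ((hsplit d₀ hd₀M).resolve_left hd₀n).2
      obtain ⟨o, ob, ho1, hletter_o, hob1, hletter_ob, hcutoob⟩ :
          ∃ o ob : ℕ × ℕ, (o = (1, 1) ∨ o = (2, 1)) ∧ letter U₁ U₂ o = some z ∧
            (ob = (1, 1) ∨ ob = (2, 1)) ∧
            letter U₁ U₂ ob = some (if z = x then y else x) ∧ Cuts U₁ U₂ lt o ob := by
        by_cases hzx : z = x
        · exact ⟨(1, 1), (2, 1), Or.inl rfl, by rw [hhead1, hzx], Or.inr rfl,
            by rw [hhead2, if_pos hzx], hcut11⟩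
        · have hzy : z = y := hzxy.resolve_left hzx
          exact ⟨(2, 1), (1, 1), Or.inr rfl, by rw [hhead2, hzy], Or.inl rfl,
            by rw [hhead1, if_neg hzx], hcut21⟩
      have hoB : Boundary U₁ U₂ o := hcutoob.1
      have hobB : Boundary U₁ U₂ ob := hcutoob.2.1
      have h2e : (2 : ℕ) ≤ (c'.1, c'.2 + 1).2 := Nat.succ_le_succ hc'B.2.1
      have hmir_e_o : Mirrors U₁ U₂ lt (c'.1, c'.2 + 1) o := by
        rcases ho1 with rfl | rfl
        · exact hmirror_one' 1 (c'.1, c'.2 + 1) (Or.inl rfl) heB h2e (hz.trans hletter_o.symm)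
        · exact hmirror_one' 2 (c'.1, c'.2 + 1) (Or.inr rfl) heB h2e (hz.trans hletter_o.symm)
      have hoMe : o ∈ Me := by
        rw [hMe, Finset.mem_filter]
        exact ⟨mem_boundaryFinset.2 hoB, hmir_e_o⟩
      have hmirs_ob : ∀ d' ∈ Mx, (d'.1, d'.2 + 1) ∈
          (boundaryFinset U₁ U₂).filter (fun d => Mirrors U₁ U₂ lt ob d) := by
        intro d' hd'
        obtain ⟨hd'M, hd'n⟩ := (hMxmem d').1 hd'
        have hlw : letter U₁ U₂ (d'.1, d'.2 + 1) = some (if z = x then y else x) :=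
          ((hsplit d' hd'M).resolve_left hd'n).1
        have hd'B : Boundary U₁' U₂' d' := hM'B d' hd'M
        have hsd'B : Boundary U₁ U₂ (d'.1, d'.2 + 1) := hsB d' hd'B
        have h2s : (2 : ℕ) ≤ (d'.1, d'.2 + 1).2 := Nat.succ_le_succ hd'B.2.1
        rw [Finset.mem_filter]
        refine ⟨mem_boundaryFinset.2 hsd'B, ?_⟩
        rcases hob1 with rfl | rfl
        · exact hmirror_one 1 (d'.1, d'.2 + 1) (Or.inl rfl) hsd'B h2s
            (hletter_ob.trans hlw.symm)
        · exact hmirror_one 2 (d'.1, d'.2 + 1) (Or.inr rfl) hsd'B h2s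
            (hletter_ob.trans hlw.symm)
      have hMxsub : Mx.image (fun p : ℕ × ℕ => (p.1, p.2 + 1)) ⊆
          (boundaryFinset U₁ U₂).filter (fun d => Mirrors U₁ U₂ lt ob d) := by
        intro dd hdd
        obtain ⟨d', hd', rfl⟩ := Finset.mem_image.1 hdd
        exact hmirs_ob d' hd'
      have eM : (Mx.image (fun p : ℕ × ℕ => (p.1, p.2 + 1))).sum f =
          Mx.sum (fun d' => f (d'.1, d'.2 + 1)) := Finset.sum_image (hinj Mx)
      have hfo := hf o (mem_boundaryFinset.2 hoB)
      have hobCut : ob ∈ (boundaryFinset U₁ U₂).filter (fun c => Cuts U₁ U₂ lt o c) :=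
        Finset.mem_filter.2 ⟨mem_boundaryFinset.2 hobB, hcutoob⟩
      have hMobLe : ((boundaryFinset U₁ U₂).filter (fun d => Mirrors U₁ U₂ lt ob d)).sum f ≤
          ((boundaryFinset U₁ U₂).filter (fun c => Cuts U₁ U₂ lt o c)).sup
          (fun c => ((boundaryFinset U₁ U₂).filter (fun d => Mirrors U₁ U₂ lt c d)).sum f) :=
        Finset.le_sup (f := fun c => ((boundaryFinset U₁ U₂).filter
          (fun d => Mirrors U₁ U₂ lt c d)).sum f) hobCut
      have hfo_gt : ((boundaryFinset U₁ U₂).filter (fun d => Mirrors U₁ U₂ lt ob d)).sum f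
          < f o := by omega
      have hfoMe : f o ≤ Me.sum f :=
        Finset.single_le_sum (fun i _ => Nat.zero_le (f i)) hoMe
      have hMxle : Mx.sum (fun d' => f (d'.1, d'.2 + 1)) < f o := by
        have h1 : (Mx.image (fun p : ℕ × ℕ => (p.1, p.2 + 1))).sum f ≤
            ((boundaryFinset U₁ U₂).filter (fun d => Mirrors U₁ U₂ lt ob d)).sum f :=
          Finset.sum_le_sum_of_subset hMxsub
        omega
      constructor
      · intro d' hd'
        by_cases hcase : Mirrors U₁ U₂ lt (c'.1, c'.2 + 1) (d'.1, d'.2 + 1)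
        · have hd'S : d' ∈ S := (hSmem d').2 ⟨hd', hcase⟩
          have hmem : (d'.1, d'.2 + 1) ∈ Me := hSsub (Finset.mem_image_of_mem _ hd'S)
          have hone : f (d'.1, d'.2 + 1) ≤ Me.sum f :=
            Finset.single_le_sum (fun i _ => Nat.zero_le (f i)) hmem
          omega
        · have hd'Mx : d' ∈ Mx := (hMxmem d').2 ⟨hd', hcase⟩
          have hmem := hmirs_ob d' hd'Mx
          have hone : f (d'.1, d'.2 + 1) ≤
              ((boundaryFinset U₁ U₂).filter (fun d => Mirrors U₁ U₂ lt ob d)).sum f :=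
            Finset.single_le_sum (fun i _ => Nat.zero_le (f i)) hmem
          omega
      · have hno : o ∉ S.image (fun p : ℕ × ℕ => (p.1, p.2 + 1)) := by
          intro hcon
          obtain ⟨d', hd'S, hEq⟩ := Finset.mem_image.1 hcon
          have hd'M : d' ∈ M' := ((hSmem d').1 hd'S).1
          have h1d : 1 ≤ d'.2 := (hM'B d' hd'M).2.1
          have ho2 : o.2 = 1 := by rcases ho1 with rfl | rfl <;> rfl
          have h3 : d'.2 + 1 = o.2 := by have := congrArg Prod.snd hEq; exact this
          omega
        have hins : insert o (S.image (fun p : ℕ × ℕ => (p.1, p.2 + 1))) ⊆ Me :=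
          Finset.insert_subset_iff.2 ⟨hoMe, hSsub⟩
        have hinsSum : (insert o (S.image (fun p : ℕ × ℕ => (p.1, p.2 + 1)))).sum f =
            f o + (S.image (fun p : ℕ × ℕ => (p.1, p.2 + 1))).sum f :=
          Finset.sum_insert hno
        have hinsLe : (insert o (S.image (fun p : ℕ × ℕ => (p.1, p.2 + 1)))).sum f ≤
            Me.sum f := Finset.sum_le_sum_of_subset hins
        omega
  obtain ⟨hstrict, hfinal⟩ := key
  calc M'.sum f'
      ≤ M'.sum (fun d' => f (d'.1, d'.2 + 1)) :=
        Finset.sum_le_sum (fun d' hd' => IH _ (hstrict d' hd') d' (hM'B d' hd') rfl)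
    _ ≤ Me.sum f := hfinal
    _ ≤ _ := hle_sup

end ExtWordEq
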